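/- Let α, β, m be complex numbers such that α+β+1 = m and α is not a nonnegative integer, and such that none of β+1, m+1, m-β, m+1-α is a nonpositive integer and Re(m-β-α) > 0. Then Σ_{j=0}^{∞} [(β+1)_j · (α)_j] / [(m+1)_j · j!] = Γ(m+1)·Γ(m-β-α) / (Γ(m-β)·Γ(m+1-α)), and consequently [Γ(β+1)/Γ(m)] · Σ_{j=0}^{∞} [(β+1)_j · (α)_j] / [(m+1)_j · j!] = m / ((m-α)·Γ(α+1)). -/

import Mathlib

/-- The Pochhammer symbol (rising factorial) `(a)_l = a(a+1)⋯(a+l-1)`. -/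
noncomputable def poch (a : ℂ) (l : ℕ) : ℂ := ∏ i ∈ Finset.range l, (a + i)


open Filter Finset Topology

lemma poch_zero (a : ℂ) : poch a 0 = 1 := by simp [poch]

lemma poch_succ (a : ℂ) (l : ℕ) : poch a (l + 1) = poch a l * (a + l) := by
  simp [poch, Finset.prod_range_succ]

lemma poch_ne_zero {a : ℂ} (h : ∀ i : ℕ, a + i ≠ 0) (l : ℕ) : poch a l ≠ 0 :=
  Finset.prod_ne_zero_iff.mpr fun i _ => h i

lemma poch_shift (a : ℂ) (j : ℕ) : poch (a + 1) j * a = poch a j * (a + j) := by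
  induction j with
  | zero => simp [poch_zero]
  | succ n ih =>
    rw [poch_succ, poch_succ, mul_right_comm, ih]
    push_cast; ring

lemma gammaSeq_eq (x : ℂ) (n : ℕ) :
    Complex.GammaSeq x n = (n : ℂ) ^ x * (Nat.factorial n) / poch x (n + 1) := by
  rfl

lemma tendsto_inv_add (w : ℂ) : Tendsto (fun n : ℕ => (w + n)⁻¹) atTop (𝓝 0) := by
  rw [tendsto_zero_iff_norm_tendsto_zero]
  have h : ∀ᶠ n : ℕ in atTop, ‖(w + (n:ℂ))⁻¹‖ ≤ 1 / ((n : ℝ) - ‖w‖) := by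
    filter_upwards [eventually_gt_atTop (Nat.ceil (‖w‖ + 1))] with n hn
    have h1 : ‖w‖ + 1 ≤ (n : ℝ) := le_trans (Nat.le_ceil _) (by exact_mod_cast hn.le)
    have h2 : (0:ℝ) < (n : ℝ) - ‖w‖ := by linarith
    have h3 : (n : ℝ) - ‖w‖ ≤ ‖w + (n:ℂ)‖ := by
      have h4 := norm_sub_le (w + (n:ℂ)) w
      have h5 : ‖w + (n:ℂ) - w‖ = (n : ℝ) := by
        simp
      rw [h5] at h4
      linarith
    rw [norm_inv]
    rw [one_div]
    exact inv_anti₀ h2 h3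
  refine squeeze_zero' (by filter_upwards with n using norm_nonneg _) h ?_
  have : Tendsto (fun n : ℕ => (n : ℝ) - ‖w‖) atTop atTop :=
    tendsto_atTop_add_const_right _ _ tendsto_natCast_atTop_atTop
  simpa [one_div, Pi.inv_def] using this.inv_tendsto_atTop

lemma tendsto_ratio (u v : ℂ) (hv : ∀ n : ℕ, v + n ≠ 0) :
    Tendsto (fun n : ℕ => (u + n) / (v + n)) atTop (𝓝 1) := by
  have h := (tendsto_inv_add v).const_mul (u - v)
  have h2 : Tendsto (fun n : ℕ => 1 + (u - v) * (v + n)⁻¹) atTop (𝓝 1) := by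
    simpa using tendsto_const_nhds.add h
  refine h2.congr fun n => ?_
  field_simp [hv n]
  ring

lemma aux_frac (F px py pz qx qy qz A B C nn : ℂ) (hF : F ≠ 0) (hpx : px ≠ 0) (hpy : py ≠ 0)
    (hpz : pz ≠ 0) (hqx : qx ≠ 0) (hqy : qy ≠ 0) (hA : A ≠ 0) (hB : B ≠ 0) (hC : C ≠ 0) :
    qz * F / (pz * C) / (qx * F / (px * A) * (qy * F / (py * B))) * (C * nn / (A * B)) =
      qz * nn / (qx * qy) * (px * py / (pz * F)) := by
  field_simp

lemma lemmaA (x y z : ℂ) (hx : ∀ i : ℕ, x + i ≠ 0) (hy : ∀ i : ℕ, y + i ≠ 0)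
    (hz : ∀ i : ℕ, z + i ≠ 0) :
    Tendsto (fun n : ℕ => (n : ℂ) ^ (z + 1 - x - y) *
        (poch x n * poch y n / (poch z n * (Nat.factorial n : ℂ)))) atTop
      (𝓝 (Complex.Gamma z / (Complex.Gamma x * Complex.Gamma y))) := by
  have hgne : ∀ w : ℂ, (∀ i : ℕ, w + i ≠ 0) → Complex.Gamma w ≠ 0 := by
    intro w hw
    refine Complex.Gamma_ne_zero fun m hm => hw m ?_
    rw [hm]; ring
  have hΓ : Complex.Gamma x * Complex.Gamma y ≠ 0 :=
    mul_ne_zero (hgne x hx) (hgne y hy)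
  have hquot : Tendsto (fun n : ℕ => Complex.GammaSeq z n /
      (Complex.GammaSeq x n * Complex.GammaSeq y n)) atTop
      (𝓝 (Complex.Gamma z / (Complex.Gamma x * Complex.Gamma y))) :=
    (Complex.GammaSeq_tendsto_Gamma z).div
      ((Complex.GammaSeq_tendsto_Gamma x).mul (Complex.GammaSeq_tendsto_Gamma y)) hΓ
  have hrat : Tendsto (fun n : ℕ => ((z + n) * n) / ((x + n) * (y + n))) atTop (𝓝 1) := by
    have h1 := tendsto_ratio z x hx
    have h2 := tendsto_ratio 0 y hy
    have h3 := h1.mul h2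
    rw [mul_one] at h3
    refine h3.congr fun n => ?_
    rw [div_mul_div_comm, zero_add]
  have key : ∀ᶠ n : ℕ in atTop, (Complex.GammaSeq z n /
      (Complex.GammaSeq x n * Complex.GammaSeq y n)) * (((z + n) * n) / ((x + n) * (y + n))) =
      (n : ℂ) ^ (z + 1 - x - y) *
        (poch x n * poch y n / (poch z n * (Nat.factorial n : ℂ))) := by
    filter_upwards [eventually_ge_atTop 1] with n hn
    have nz : (n : ℂ) ≠ 0 := Nat.cast_ne_zero.mpr (by omega)
    have hcx : (n : ℂ) ^ x ≠ 0 := by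
      simp [Complex.cpow_eq_zero_iff, nz]
    have hcy : (n : ℂ) ^ y ≠ 0 := by
      simp [Complex.cpow_eq_zero_iff, nz]
    have hfac : (Nat.factorial n : ℂ) ≠ 0 := Nat.cast_ne_zero.mpr (Nat.factorial_ne_zero n)
    have hpow : (n : ℂ) ^ (z + 1 - x - y) = (n : ℂ) ^ z * n / ((n : ℂ) ^ x * (n : ℂ) ^ y) := by
      rw [show z + 1 - x - y = (z + 1) - (x + y) by ring, Complex.cpow_sub _ _ nz,
        Complex.cpow_add _ _ nz, Complex.cpow_add _ _ nz, Complex.cpow_one]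
    rw [hpow, gammaSeq_eq, gammaSeq_eq, gammaSeq_eq, poch_succ, poch_succ, poch_succ]
    have hpx := poch_ne_zero hx n
    have hpy := poch_ne_zero hy n
    have hpz := poch_ne_zero hz n
    have hxn := hx n; have hyn := hy n; have hzn := hz n
    generalize poch x n = px at *
    generalize poch y n = py at *
    generalize poch z n = pz at *
    generalize (n : ℂ) ^ x = qx at *
    generalize (n : ℂ) ^ y = qy at *
    generalize (n : ℂ) ^ z = qz at *
    generalize hA : x + (n : ℂ) = A at *
    generalize hB : y + (n : ℂ) = B at *
    generalize hC : z + (n : ℂ) = C at *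
    generalize (Nat.factorial n : ℂ) = F at *
    exact aux_frac F px py pz qx qy qz A B C n hfac hpx hpy hpz hcx hcy hxn hyn hzn
  have := (hquot.mul hrat)
  rw [mul_one] at this
  exact Tendsto.congr' key this

lemma norm_term_bound (x y z : ℂ) (hx : ∀ i : ℕ, x + i ≠ 0) (hy : ∀ i : ℕ, y + i ≠ 0)
    (hz : ∀ i : ℕ, z + i ≠ 0) (hw : 2 ≤ (z + 1 - x - y).re) :
    ∃ M : ℝ, 0 ≤ M ∧ ∀ᶠ n : ℕ in atTop,
      ‖poch x n * poch y n / (poch z n * (Nat.factorial n : ℂ))‖ ≤ M / (n : ℝ) ^ (2:ℕ) := by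
  set w := z + 1 - x - y with hwdef
  set L := Complex.Gamma z / (Complex.Gamma x * Complex.Gamma y) with hL
  set u : ℕ → ℂ := fun n => poch x n * poch y n / (poch z n * (Nat.factorial n : ℂ)) with hu
  have hlim := lemmaA x y z hx hy hz
  have hM : ∀ᶠ n : ℕ in atTop, ‖(n : ℂ) ^ w * u n‖ ≤ ‖L‖ + 1 := by
    have := hlim.norm
    exact this.eventually_le_const (by linarith [norm_nonneg L])
  refine ⟨‖L‖ + 1, by positivity, ?_⟩
  filter_upwards [hM, eventually_ge_atTop 1] with n h1 hn
  have hn1 : (1:ℝ) ≤ (n:ℝ) := by exact_mod_cast hn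
  have hnpos : (0:ℕ) < n := hn
  have hnorm : ‖(n : ℂ) ^ w‖ = (n:ℝ) ^ w.re := Complex.norm_natCast_cpow_of_pos hnpos w
  have hrpos : (0:ℝ) < (n:ℝ) ^ w.re := Real.rpow_pos_of_pos (by linarith) _
  rw [norm_mul, hnorm] at h1
  have h2 : ‖u n‖ ≤ (‖L‖ + 1) / (n:ℝ) ^ w.re := by
    rw [le_div_iff₀ hrpos]
    linarith [h1]
  refine h2.trans ?_
  have hle : (n:ℝ) ^ (2:ℕ) ≤ (n:ℝ) ^ w.re := by
    calc (n:ℝ) ^ (2:ℕ) = (n:ℝ) ^ ((2:ℕ):ℝ) := by rw [Real.rpow_natCast]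
    _ ≤ (n:ℝ) ^ w.re := Real.rpow_le_rpow_of_exponent_le hn1 (by exact_mod_cast hw)
  exact div_le_div_of_nonneg_left (by positivity) (by positivity) hle

lemma lemmaB (x y z : ℂ) (hx : ∀ i : ℕ, x + i ≠ 0) (hy : ∀ i : ℕ, y + i ≠ 0)
    (hz : ∀ i : ℕ, z + i ≠ 0) (hw : 2 ≤ (z + 1 - x - y).re) :
    Summable (fun n : ℕ => poch x n * poch y n / (poch z n * (Nat.factorial n : ℂ))) := by
  obtain ⟨M, hM0, hM⟩ := norm_term_bound x y z hx hy hz hw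
  refine Summable.of_norm_bounded_eventually_nat (g := fun n : ℕ => M * (1 / (n:ℝ) ^ (2:ℕ))) ?_ ?_
  · exact (Real.summable_one_div_nat_pow.mpr one_lt_two).mul_left M
  · filter_upwards [hM] with n h
    rw [mul_one_div]
    exact h

lemma lemmaC (x y z : ℂ) (hx : ∀ i : ℕ, x + i ≠ 0) (hy : ∀ i : ℕ, y + i ≠ 0)
    (hz : ∀ i : ℕ, z + i ≠ 0) (hw : 2 ≤ (z + 1 - x - y).re) :
    Tendsto (fun n : ℕ => (n : ℂ) *
      (poch x n * poch y n / (poch z n * (Nat.factorial n : ℂ)))) atTop (𝓝 0) := by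
  obtain ⟨M, hM0, hM⟩ := norm_term_bound x y z hx hy hz hw
  rw [tendsto_zero_iff_norm_tendsto_zero]
  refine squeeze_zero' (by filter_upwards with n using norm_nonneg _) ?_ ?_ (f := fun n : ℕ => ‖((n:ℂ) * _)‖) (g := fun n : ℕ => M / (n:ℝ))
  · filter_upwards [hM, eventually_ge_atTop 1] with n h hn
    have hn1 : (1:ℝ) ≤ (n:ℝ) := by exact_mod_cast hn
    rw [norm_mul, Complex.norm_natCast]
    calc (n:ℝ) * ‖_ / _‖ ≤ (n:ℝ) * (M / (n:ℝ)^(2:ℕ)) := by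
          exact mul_le_mul_of_nonneg_left h (by positivity)
      _ = M / (n:ℝ) := by
          field_simp
  · exact tendsto_const_div_atTop_nhds_zero_nat M

noncomputable def T (a b cc : ℂ) (j : ℕ) : ℂ :=
  poch a j * poch b j / (poch cc j * (Nat.factorial j : ℂ))

lemma T_zero (a b cc : ℂ) : T a b cc 0 = 1 := by
  simp [T, poch_zero]

lemma T_shift_c (a b cc : ℂ) (hcc : ∀ i : ℕ, cc + i ≠ 0) (j : ℕ) :
    T a b (cc + 1) j = T a b cc j * cc / (cc + j) := by
  have hcc0 : cc ≠ 0 := by simpa using hcc 0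
  have h : poch (cc + 1) j = poch cc j * (cc + j) / cc := by
    rw [eq_div_iff hcc0]; exact poch_shift cc j
  unfold T
  rw [h]
  have hF : (Nat.factorial j : ℂ) ≠ 0 := Nat.cast_ne_zero.mpr (Nat.factorial_ne_zero j)
  field_simp [poch_ne_zero hcc, hcc j]
  try ring
  try exact Or.inl trivial

lemma T_succ (a b cc : ℂ) (j : ℕ) (hF : (Nat.factorial j : ℂ) ≠ 0)
    (hpc : poch cc j ≠ 0) (hccj : cc + j ≠ 0) :
    T a b cc (j + 1) = T a b cc j * ((a + j) * (b + j)) / ((cc + j) * (j + 1)) := by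
  unfold T
  rw [poch_succ, poch_succ, poch_succ, Nat.factorial_succ]
  push_cast
  have hj1 : ((j : ℂ) + 1) ≠ 0 := by
    exact_mod_cast Nat.succ_ne_zero j
  field_simp

lemma contiguous (a b cc : ℂ) (ha : ∀ i : ℕ, a + i ≠ 0) (hb : ∀ i : ℕ, b + i ≠ 0)
    (hcc : ∀ i : ℕ, cc + i ≠ 0) (hw : 2 ≤ (cc + 1 - a - b).re) :
    cc * (cc - a - b) * ∑' j, T a b cc j = (cc - a) * (cc - b) * ∑' j, T a b (cc + 1) j := by
  have hcc1 : ∀ i : ℕ, (cc + 1) + i ≠ 0 := by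
    intro i
    have := hcc (i + 1)
    push_cast at this ⊢
    intro h; apply this; rw [← h]; ring
  have S1 : Summable (fun j => T a b cc j) := lemmaB a b cc ha hb hcc hw
  have S2 : Summable (fun j => T a b (cc + 1) j) := by
    refine lemmaB a b (cc + 1) ha hb hcc1 ?_
    have : (cc + 1 + 1 - a - b).re = (cc + 1 - a - b).re + 1 := by
      simp [Complex.add_re, Complex.sub_re, Complex.one_re]; ring
    rw [this]; linarith
  set d : ℕ → ℂ := fun j => cc * j * T a b cc j with hd
  have key : ∀ j : ℕ, cc * (cc - a - b) * T a b cc j - (cc - a) * (cc - b) * T a b (cc + 1) j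
      = d j - d (j + 1) := by
    intro j
    have hF : (Nat.factorial j : ℂ) ≠ 0 := Nat.cast_ne_zero.mpr (Nat.factorial_ne_zero j)
    rw [T_shift_c a b cc hcc j, hd]
    simp only
    rw [T_succ a b cc j hF (poch_ne_zero hcc j) (hcc j)]
    have hj1 : ((j : ℂ) + 1) ≠ 0 := by exact_mod_cast Nat.succ_ne_zero j
    have hccj : cc + j ≠ 0 := hcc j
    push_cast
    generalize T a b cc j = t
    field_simp
    ring
  -- telescoping: tsum of the differences is 0
  have hsum : Summable (fun j => cc * (cc - a - b) * T a b cc j -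
      (cc - a) * (cc - b) * T a b (cc + 1) j) := (S1.mul_left _).sub (S2.mul_left _)
  have htsum : ∑' j, (cc * (cc - a - b) * T a b cc j - (cc - a) * (cc - b) * T a b (cc + 1) j)
      = cc * (cc - a - b) * ∑' j, T a b cc j - (cc - a) * (cc - b) * ∑' j, T a b (cc + 1) j := by
    rw [Summable.tsum_sub (S1.mul_left _) (S2.mul_left _), tsum_mul_left, tsum_mul_left]
  have hzero : ∑' j, (cc * (cc - a - b) * T a b cc j -
      (cc - a) * (cc - b) * T a b (cc + 1) j) = 0 := by
    have hpartial := hsum.hasSum.tendsto_sum_nat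
    have hpeq : ∀ n : ℕ, ∑ j ∈ Finset.range n, (cc * (cc - a - b) * T a b cc j -
        (cc - a) * (cc - b) * T a b (cc + 1) j) = d 0 - d n := by
      intro n
      rw [Finset.sum_congr rfl fun j _ => key j]
      exact Finset.sum_range_sub' d n
    have hd0 : d 0 = 0 := by simp [hd]
    have hdlim : Tendsto (fun n : ℕ => d 0 - d n) atTop (𝓝 0) := by
      have h1 := (lemmaC a b cc ha hb hcc hw).const_mul cc
      have h2 : Tendsto (fun n : ℕ => d n) atTop (𝓝 0) := by
        have : (fun n : ℕ => d n) = fun n : ℕ => cc * ((n : ℂ) *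
            (poch a n * poch b n / (poch cc n * (Nat.factorial n : ℂ)))) := by
          funext n; simp [hd, T]; ring
        rw [this]
        simpa using h1
      simpa [hd0] using ((tendsto_const_nhds :
        Tendsto (fun _ : ℕ => d 0) atTop (𝓝 (d 0))).sub h2)
    exact tendsto_nhds_unique hpartial (hdlim.congr fun n => (hpeq n).symm)
  rw [htsum] at hzero
  linear_combination hzero

lemma tendsto_tsum_T_one (a b c : ℂ) (ha : ∀ i : ℕ, a + i ≠ 0) (hb : ∀ i : ℕ, b + i ≠ 0)
    (hc : ∀ i : ℕ, c + i ≠ 0) :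
    Tendsto (fun n : ℕ => ∑' j, T a b (c + n) j) atTop (𝓝 1) := by
  set R : ℝ := max 1 (‖a‖ + ‖b‖ + 2) with hR
  have hR1 : (1:ℝ) ≤ R := le_max_left _ _
  have hR2 : ‖a‖ + ‖b‖ + 2 ≤ R := le_max_right _ _
  have hRz : ∀ i : ℕ, (R:ℂ) + i ≠ 0 := by
    intro i h
    have := congrArg Complex.re h
    simp [Complex.add_re, Complex.ofReal_re, Complex.natCast_re] at this
    have : (0:ℝ) ≤ (i:ℝ) := Nat.cast_nonneg i
    nlinarith [hR1]
  have hsummable : Summable (fun j : ℕ => ‖T a b (R:ℂ) j‖) := by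
    apply summable_norm_iff.mpr
    refine lemmaB a b (R:ℂ) ha hb hRz ?_
    have hra : a.re ≤ ‖a‖ := Complex.re_le_norm a
    have hrb : b.re ≤ ‖b‖ := Complex.re_le_norm b
    simp only [Complex.sub_re, Complex.add_re, Complex.ofReal_re, Complex.one_re]
    linarith
  set g : ℕ → ℂ := fun j => if j = 0 then 1 else 0 with hg
  have hgsum : ∑' j, g j = 1 := by
    rw [hg]
    exact tsum_ite_eq 0 (fun _ => (1:ℂ))
  have hpt : ∀ j : ℕ, Tendsto (fun n : ℕ => T a b (c + n) j) atTop (𝓝 (g j)) := by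
    intro j
    match j with
    | 0 =>
      simp only [T_zero, hg, if_pos rfl]
      exact tendsto_const_nhds
    | (s+1) =>
      have hval : ∀ n : ℕ, T a b (c + n) (s+1) =
          (poch a (s+1) * poch b (s+1) / (Nat.factorial (s+1) : ℂ)) *
            ∏ i ∈ Finset.range (s+1), ((c + i) + n)⁻¹ := by
        intro n
        unfold T poch
        rw [show ∏ i ∈ Finset.range (s+1), (c + (i:ℂ) + n)⁻¹ =
            (∏ i ∈ Finset.range (s+1), (c + (n:ℂ) + i))⁻¹ from by
          rw [← Finset.prod_inv_distrib]
          exact Finset.prod_congr rfl fun i _ => by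
            rw [show c + (n:ℂ) + i = c + i + n from by ring]]
        simp only [div_eq_mul_inv, mul_inv]
        ring
    -- limit of the product is 0
      have hprod : Tendsto (fun n : ℕ => ∏ i ∈ Finset.range (s+1), ((c + i) + (n:ℂ))⁻¹)
          atTop (𝓝 (∏ i ∈ Finset.range (s+1), (0:ℂ))) := by
        apply tendsto_finset_prod
        intro i _
        exact tendsto_inv_add (c + i)
      rw [Finset.prod_const, Finset.card_range, zero_pow (Nat.succ_ne_zero s)] at hprod
      have := hprod.const_mul (poch a (s+1) * poch b (s+1) / (Nat.factorial (s+1) : ℂ))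
      rw [mul_zero] at this
      have hgj : g (s+1) = 0 := by simp [hg]
      rw [hgj]
      exact this.congr fun n => (hval n).symm
  have hbound : ∀ᶠ n : ℕ in atTop, ∀ j : ℕ, ‖T a b (c + n) j‖ ≤ ‖T a b (R:ℂ) j‖ := by
    filter_upwards [eventually_ge_atTop (Nat.ceil (R - c.re))] with n hn j
    have hnge : R - c.re ≤ (n:ℝ) := le_trans (Nat.le_ceil _) (by exact_mod_cast hn)
    unfold T
    simp only [norm_div, norm_mul]
    have hposR : (0:ℝ) < ‖poch (R:ℂ) j‖ * ‖(Nat.factorial j : ℂ)‖ := by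
      apply mul_pos
      · exact norm_pos_iff.mpr (poch_ne_zero hRz j)
      · exact norm_pos_iff.mpr (Nat.cast_ne_zero.mpr (Nat.factorial_ne_zero j))
    apply div_le_div_of_nonneg_left (by positivity) (by positivity)
    apply mul_le_mul_of_nonneg_right _ (norm_nonneg _)
    -- ‖poch R j‖ ≤ ‖poch (c+n) j‖
    unfold poch
    rw [norm_prod, norm_prod]
    apply Finset.prod_le_prod (fun i _ => norm_nonneg _)
    intro i _
    have h1 : ‖(R:ℂ) + i‖ = R + i := by
      rw [show (R:ℂ) + i = ((R + i : ℝ) : ℂ) by push_cast; ring, Complex.norm_real]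
      exact Real.norm_of_nonneg (by positivity)
    rw [h1]
    have h2 : R + i ≤ (c + n + i).re := by
      simp only [Complex.add_re, Complex.natCast_re]
      linarith
    exact le_trans h2 (Complex.re_le_norm _)
  have := tendsto_tsum_of_dominated_convergence hsummable hpt hbound
  rw [hgsum] at this
  exact this

lemma gauss_sum (a b c : ℂ) (ha : ∀ i : ℕ, a + i ≠ 0) (hb : ∀ i : ℕ, b + i ≠ 0)
    (hc : ∀ i : ℕ, c + i ≠ 0) (hca : ∀ i : ℕ, (c - a) + i ≠ 0) (hcb : ∀ i : ℕ, (c - b) + i ≠ 0)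
    (hceq : c = a + b + 1) :
    ∑' j, T a b c j =
      Complex.Gamma c / (Complex.Gamma (c - a) * Complex.Gamma (c - b)) := by
  set P : ℕ → ℂ := fun n => poch (c-a) n * poch (c-b) n / (poch c n * (Nat.factorial n : ℂ))
    with hP
  have hiter : ∀ n : ℕ, ∑' j, T a b c j = P n * ∑' j, T a b (c + n) j := by
    intro n
    induction n with
    | zero => simp [hP, poch_zero]
    | succ n ih =>
      have hcn : ∀ i : ℕ, (c + n) + i ≠ 0 := by
        intro i
        have := hc (n + i)
        push_cast at this ⊢
        intro h; apply this; rw [← h]; ring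
      have hw : 2 ≤ ((c + n) + 1 - a - b).re := by
        have he : (c + n) + 1 - a - b = ((n:ℂ) + 2) := by rw [hceq]; ring
        rw [he]
        simp only [Complex.add_re, Complex.natCast_re, Complex.ofReal_re]
        norm_num
      have hcont := contiguous a b (c + n) ha hb hcn hw
      rw [show (c + (n:ℂ)) + 1 = c + ((n+1 : ℕ) : ℂ) by push_cast; ring] at hcont
      have hcont' : (c + (n:ℂ)) * ((n:ℂ) + 1) * ∑' j, T a b (c + (n:ℂ)) j =
          (c - a + n) * (c - b + n) * ∑' j, T a b (c + ((n+1:ℕ):ℂ)) j := by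
        linear_combination hcont - (c + (n:ℂ)) * (∑' j, T a b (c + (n:ℂ)) j) * hceq
      rw [ih]
      have hpc := poch_ne_zero hc n
      have hF : (Nat.factorial n : ℂ) ≠ 0 := Nat.cast_ne_zero.mpr (Nat.factorial_ne_zero n)
      have hcnn : c + (n:ℂ) ≠ 0 := hc n
      have hn1 : ((n:ℂ) + 1) ≠ 0 := by exact_mod_cast Nat.succ_ne_zero n
      rw [hP]
      simp only
      generalize hs0 : (∑' j, T a b (c + (n:ℂ)) j) = s0 at *
      generalize hs1 : (∑' j, T a b (c + ((n+1:ℕ):ℂ)) j) = s1 at *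
      rw [poch_succ, poch_succ, poch_succ, Nat.factorial_succ, Nat.cast_mul, Nat.cast_add,
        Nat.cast_one]
      generalize poch (c - a) n = pa at *
      generalize poch (c - b) n = pb at *
      generalize hpcn : poch c n = pc at *
      field_simp
      linear_combination (pa * pb) * hcont'
  have hPlim : Tendsto P atTop
      (𝓝 (Complex.Gamma c / (Complex.Gamma (c - a) * Complex.Gamma (c - b)))) := by
    have h := lemmaA (c - a) (c - b) c hca hcb hc
    have hexp : c + 1 - (c - a) - (c - b) = 0 := by rw [hceq]; ring
    rw [hexp] at h
    simpa [Complex.cpow_zero] using h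
  have hSlim := tendsto_tsum_T_one a b c ha hb hc
  have hlim := hPlim.mul hSlim
  rw [mul_one] at hlim
  exact tendsto_nhds_unique
    ((tendsto_const_nhds : Tendsto (fun _ : ℕ => ∑' j, T a b c j) atTop _).congr
      fun n => hiter n) hlim

/-- Gauss's theorem applied to `₂F₁(β+1, α; m+1; 1)` when `α + β + 1 = m`, together with the
resulting closed form `m / ((m-α)·Γ(α+1))`. -/
theorem gauss_2F1_special_case (α β m : ℂ) (hm : α + β + 1 = m)
    (hα : ∀ N : ℕ, α ≠ (N : ℂ))
    (h1 : ∀ N : ℕ, β + 1 ≠ -(N : ℂ))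
    (h2 : ∀ N : ℕ, m + 1 ≠ -(N : ℂ))
    (h3 : ∀ N : ℕ, m - β ≠ -(N : ℂ))
    (h4 : ∀ N : ℕ, m + 1 - α ≠ -(N : ℂ))
    (hre : 0 < (m - β - α).re) :
    (∑' j : ℕ, poch (β + 1) j * poch α j / (poch (m + 1) j * (Nat.factorial j : ℂ)) =
      Complex.Gamma (m + 1) * Complex.Gamma (m - β - α) /
        (Complex.Gamma (m - β) * Complex.Gamma (m + 1 - α))) ∧
    (Complex.Gamma (β + 1) / Complex.Gamma m) *
        ∑' j : ℕ, poch (β + 1) j * poch α j / (poch (m + 1) j * (Nat.factorial j : ℂ)) =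
      m / ((m - α) * Complex.Gamma (α + 1)) := by
  have ha : ∀ i : ℕ, (β + 1) + i ≠ 0 := fun i h => h1 i (by linear_combination h)
  have hb : ∀ i : ℕ, α + i ≠ 0 := by
    intro i
    match i with
    | 0 => exact fun h => hα 0 (by simpa using h)
    | (k+1) =>
      intro h
      push_cast at h
      exact h3 k (by linear_combination h - hm)
  have hcz : ∀ i : ℕ, (m + 1) + i ≠ 0 := fun i h => h2 i (by linear_combination h)
  have hca : ∀ i : ℕ, ((m + 1) - (β + 1)) + i ≠ 0 := fun i h => h3 i (by linear_combination h)
  have hcb : ∀ i : ℕ, ((m + 1) - α) + i ≠ 0 := fun i h => h4 i (by linear_combination h)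
  have hceq : m + 1 = (β + 1) + α + 1 := by linear_combination -hm
  have hGauss := gauss_sum (β + 1) α (m + 1) ha hb hcz hca hcb hceq
  have hsum_eq : (∑' j : ℕ, poch (β + 1) j * poch α j /
      (poch (m + 1) j * (Nat.factorial j : ℂ))) = ∑' j, T (β + 1) α (m + 1) j := rfl
  have h1' : m - β - α = 1 := by linear_combination -hm
  have e2 : m - β = α + 1 := by linear_combination -hm
  have e3 : m + 1 - α = β + 2 := by linear_combination -hm
  have e5 : m - α = β + 1 := by linear_combination -hm
  constructor
  · rw [hsum_eq, hGauss, h1', Complex.Gamma_one, mul_one,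
      show (m + 1) - (β + 1) = m - β from by ring]
  · rw [hsum_eq, hGauss, show (m + 1) - (β + 1) = m - β from by ring]
    by_cases hm0 : m = 0
    · rw [hm0]
      simp [Complex.Gamma_zero]
    · have hmne : Complex.Gamma m ≠ 0 := by
        refine Complex.Gamma_ne_zero ?_
        intro n
        match n with
        | 0 => simpa using hm0
        | (k+1) =>
          intro h
          push_cast at h
          exact h2 k (by linear_combination h)
      have e1 : Complex.Gamma (m + 1) = m * Complex.Gamma m := Complex.Gamma_add_one m hm0
      have hβ1 : (β : ℂ) + 1 ≠ 0 := by simpa using h1 0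
      have e4 : Complex.Gamma (β + 2) = (β + 1) * Complex.Gamma (β + 1) := by
        have h := Complex.Gamma_add_one (β + 1) hβ1
        rw [show (β : ℂ) + 1 + 1 = β + 2 from by ring] at h
        exact h
      have hΓα : Complex.Gamma (α + 1) ≠ 0 := by
        refine Complex.Gamma_ne_zero fun k hk => h3 k ?_
        rw [e2, hk]
      have hΓβ : Complex.Gamma (β + 1) ≠ 0 := Complex.Gamma_ne_zero fun k => h1 k
      rw [e1, e3, e4, e2, e5]
      field_simp
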